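/- Let Θ and Y be measurable spaces, ν a probability on Θ, τ : Θ × Y → Y measurable, and l̄ a ν-Jacobian. If a probability ρ on Y is stationary with respect to (l̄, ν, τ), then the probability π on Θ × Y defined by dπ = l̄(θ,y) dν(θ) dρ(y) is holonomic with respect to τ, and the y-marginal of π equals ρ. -/

import Mathlib

open MeasureTheory

/-- A probability `π` on `Θ × Y` is holonomic with respect to the IFS `τ`. -/
def IsHolonomic {Θ Y : Type*} [MeasurableSpace Θ] [MeasurableSpace Y]
    (τ : Θ → Y → Y) (π : Measure (Θ × Y)) : Prop :=
  ∀ g : Y → ℝ, Measurable g → (∃ C, ∀ y, |g y| ≤ C) →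
    ∫ p, g p.2 ∂π = ∫ p, g (τ p.1 p.2) ∂π

/-- A probability `ρ` on `Y` is stationary with respect to `(l̄, ν, τ)`. -/
def IsStationary' {Θ Y : Type*} [MeasurableSpace Θ] [MeasurableSpace Y]
    (lbar : Θ → Y → ℝ) (ν : Measure Θ) (τ : Θ → Y → Y) (ρ : Measure Y) : Prop :=
  ∀ g : Y → ℝ, Measurable g → (∃ C, ∀ y, |g y| ≤ C) →
    ∫ y, ∫ θ, lbar θ y * g (τ θ y) ∂ν ∂ρ = ∫ y, g y ∂ρ

/-- if `ρ` is stationary with respect to `(l̄, ν, τ)` then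
`dπ = l̄(θ,y) dν(θ) dρ(y)` is holonomic and its `y`-marginal is `ρ`. -/
theorem stationary_gives_holonomic {Θ Y : Type*} [MeasurableSpace Θ] [MeasurableSpace Y]
    (ν : Measure Θ) [IsProbabilityMeasure ν]
    (τ : Θ → Y → Y) (hτ : Measurable fun p : Θ × Y => τ p.1 p.2)
    (lbar : Θ → Y → ℝ) (hlbar : Measurable fun p : Θ × Y => lbar p.1 p.2)
    (hlbarnn : ∀ θ y, 0 ≤ lbar θ y) (hJ : ∀ y, ∫ θ, lbar θ y ∂ν = 1)
    (ρ : Measure Y) [IsProbabilityMeasure ρ]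
    (hstat : IsStationary' lbar ν τ ρ) :
    IsHolonomic τ ((ν.prod ρ).withDensity fun p => ENNReal.ofReal (lbar p.1 p.2)) ∧
      Measure.map Prod.snd
        ((ν.prod ρ).withDensity fun p => ENNReal.ofReal (lbar p.1 p.2)) = ρ := by
  -- integrability of lbar(·, y) for each y
  have hintθ : ∀ y, Integrable (fun θ => lbar θ y) ν := by
    intro y
    by_contra h
    have := hJ y
    rw [integral_undef h] at this
    norm_num at this
  -- ∫⁻ θ, ofReal (lbar θ y) = 1
  have hlintθ : ∀ y, ∫⁻ θ, ENNReal.ofReal (lbar θ y) ∂ν = 1 := by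
    intro y
    rw [← ofReal_integral_eq_lintegral_ofReal (hintθ y)
      (Filter.Eventually.of_forall fun θ => hlbarnn θ y), hJ y, ENNReal.ofReal_one]
  -- total lintegral of lbar over the product is 1
  have hL : ∫⁻ p, ENNReal.ofReal (lbar p.1 p.2) ∂(ν.prod ρ) = 1 := by
    rw [lintegral_prod_symm _ (hlbar.ennreal_ofReal.aemeasurable)]
    simp only [hlintθ, lintegral_one, measure_univ, mul_one]
  -- lbar is integrable over the product
  have hIntlbar : Integrable (fun p : Θ × Y => lbar p.1 p.2) (ν.prod ρ) := by
    refine ⟨hlbar.aestronglyMeasurable, ?_⟩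
    rw [hasFiniteIntegral_iff_norm]
    have : ∀ p : Θ × Y, ENNReal.ofReal ‖lbar p.1 p.2‖ = ENNReal.ofReal (lbar p.1 p.2) := by
      intro p; rw [Real.norm_eq_abs, abs_of_nonneg (hlbarnn p.1 p.2)]
    simp only [this, hL]
    exact ENNReal.one_lt_top
  have main : ∀ (F : Θ × Y → ℝ), Measurable F → (∃ C, ∀ p, |F p| ≤ C) →
      ∫ p, F p ∂((ν.prod ρ).withDensity fun p => ENNReal.ofReal (lbar p.1 p.2)) =
        ∫ y, ∫ θ, lbar θ y * F (θ, y) ∂ν ∂ρ := by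
    rintro F hF ⟨C, hC⟩
    have hmeas : Measurable fun p : Θ × Y => (lbar p.1 p.2).toNNReal :=
      hlbar.real_toNNReal
    have h1 : ((ν.prod ρ).withDensity fun p => ENNReal.ofReal (lbar p.1 p.2)) =
        ((ν.prod ρ).withDensity fun p => ((lbar p.1 p.2).toNNReal : ENNReal)) := rfl
    rw [h1, integral_withDensity_eq_integral_smul hmeas]
    have h2 : (fun p : Θ × Y => (lbar p.1 p.2).toNNReal • F p) =
        fun p : Θ × Y => lbar p.1 p.2 * F p := by
      funext p
      simp [NNReal.smul_def, Real.coe_toNNReal _ (hlbarnn p.1 p.2)]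
    rw [h2]
    have hIntF : Integrable (fun p : Θ × Y => lbar p.1 p.2 * F p) (ν.prod ρ) := by
      refine Integrable.mono' (hIntlbar.const_mul C) ((hlbar.mul hF).aestronglyMeasurable) ?_
      refine Filter.Eventually.of_forall fun p => ?_
      rw [Real.norm_eq_abs, abs_mul, abs_of_nonneg (hlbarnn p.1 p.2)]
      calc lbar p.1 p.2 * |F p| ≤ lbar p.1 p.2 * C :=
            mul_le_mul_of_nonneg_left (hC p) (hlbarnn p.1 p.2)
        _ = C * lbar p.1 p.2 := mul_comm _ _
    exact integral_prod_symm _ hIntF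
  constructor
  · rintro g hg ⟨C, hC⟩
    rw [main (fun p => g p.2) (hg.comp measurable_snd) ⟨C, fun p => hC p.2⟩,
        main (fun p => g (τ p.1 p.2)) (hg.comp hτ) ⟨C, fun p => hC _⟩]
    rw [hstat g hg ⟨C, hC⟩]
    have : ∀ y, ∫ θ, lbar θ y * g y ∂ν = g y := by
      intro y
      rw [integral_mul_const, hJ y, one_mul]
    simp only [this]
  · ext s hs
    rw [Measure.map_apply measurable_snd hs, withDensity_apply _ (measurable_snd hs)]
    have hpre : (Prod.snd ⁻¹' s : Set (Θ × Y)) = Set.univ ×ˢ s := by ext p; simp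
    rw [hpre, ← lintegral_indicator ((MeasurableSet.univ).prod hs)]
    rw [lintegral_prod_symm _ ((hlbar.ennreal_ofReal.indicator
      ((MeasurableSet.univ).prod hs)).aemeasurable)]
    have : ∀ y, ∫⁻ θ, (Set.univ ×ˢ s).indicator
        (fun p : Θ × Y => ENNReal.ofReal (lbar p.1 p.2)) (θ, y) ∂ν
        = s.indicator (fun _ => (1 : ENNReal)) y := by
      intro y
      by_cases hy : y ∈ s
      · simp only [Set.indicator_of_mem hy]
        have : ∀ θ, (Set.univ ×ˢ s).indicator
            (fun p : Θ × Y => ENNReal.ofReal (lbar p.1 p.2)) (θ, y)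
            = ENNReal.ofReal (lbar θ y) := by
          intro θ
          exact Set.indicator_of_mem (by simp [hy]) _
        simp only [this, hlintθ y]
      · simp only [Set.indicator_of_notMem hy]
        have : ∀ θ, (Set.univ ×ˢ s).indicator
            (fun p : Θ × Y => ENNReal.ofReal (lbar p.1 p.2)) (θ, y) = 0 := by
          intro θ
          exact Set.indicator_of_notMem (by simp [hy]) _
        simp only [this, lintegral_zero]
    simp only [this]
    rw [lintegral_indicator hs]
    simp
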